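/- Let Ω ⊆ ℝ, α > 0, 1 ≤ p < ∞. The space W^{α,p}±(Ω) = {u ∈ L^p(Ω) : the weak fractional derivative D^α u exists and belongs to L^p(Ω)} (for 0 < α < 1) equipped with the norm (‖u‖_{L^p}^p + ‖D^α u‖_{L^p}^p)^{1/p} is a Banach space. -/

import Mathlib

open MeasureTheory Real Set Filter Topology
open scoped ENNReal

/-- Left Riemann–Liouville fractional integral of order `α` on `(a, ·)`. -/
noncomputable def leftRLInt (α a : ℝ) (u : ℝ → ℝ) (x : ℝ) : ℝ :=
  (1 / Real.Gamma α) * ∫ y in a..x, u y * (x - y) ^ (α - 1)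

/-- Left Riemann–Liouville fractional derivative of order `α` on `(a, ·)`. -/
noncomputable def leftRLDeriv (α a : ℝ) (u : ℝ → ℝ) (x : ℝ) : ℝ :=
  (1 / Real.Gamma (1 - α)) * deriv (fun z => ∫ y in a..z, u y * (z - y) ^ (-α)) x

/-- Right Riemann–Liouville fractional derivative of order `α` on `ℝ`. -/
noncomputable def rightRLDerivR (α : ℝ) (φ : ℝ → ℝ) (x : ℝ) : ℝ :=
  -(1 / Real.Gamma (1 - α)) * deriv (fun z => ∫ y in Set.Ioi z, φ y * (y - z) ^ (-α)) x

/-- Left Riemann–Liouville fractional derivative of order `α` on `ℝ` (lower limit `-∞`). -/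
noncomputable def leftRLDerivR (α : ℝ) (φ : ℝ → ℝ) (x : ℝ) : ℝ :=
  (1 / Real.Gamma (1 - α)) * deriv (fun z => ∫ y in Set.Iio z, φ y * (z - y) ^ (-α)) x

/-- `v` is the left weak fractional derivative of order `α` of `u` on `Ω`:
`∫ v φ = ∫ u D₊^α φ` for all test functions `φ` compactly supported in `Ω`. -/
def IsLeftWeakFracDerivOn (α : ℝ) (Ω : Set ℝ) (u v : ℝ → ℝ) : Prop :=
  ∀ φ : ℝ → ℝ, ContDiff ℝ (⊤ : ℕ∞) φ → HasCompactSupport φ → tsupport φ ⊆ Ω →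
    ∫ x in Ω, v x * φ x = ∫ x in Ω, u x * rightRLDerivR α φ x

/-- The space `{u ∈ L^p((a,b)) : D^α u ∈ L^p((a,b))}` with norm
`(‖u‖_p^p + ‖D^α u‖_p^p)^{1/p}` is a Banach space: every Cauchy sequence (in both components)
converges in the space. -/
lemma translate_Ioi (z : ℝ) (f : ℝ → ℝ) :
    ∫ y in Set.Ioi z, f y = ∫ t in Set.Ioi (0:ℝ), f (z + t) := by
  have h := (MeasurableEquiv.addLeft z).measurableEmbedding.setIntegral_map (μ := volume) f (Set.Ioi z)
  have hmap : Measure.map (⇑(MeasurableEquiv.addLeft z)) volume = volume := by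
    simpa [MeasurableEquiv.addLeft] using map_add_left_eq_self (volume : Measure ℝ) z
  rw [hmap] at h
  rw [h]
  have : ⇑(MeasurableEquiv.addLeft z) ⁻¹' Set.Ioi z = Set.Ioi 0 := by
    ext t; simp [MeasurableEquiv.addLeft]
  rw [this]
  rfl

set_option maxHeartbeats 1000000 in
lemma rightRL_bound (α a : ℝ) (hα : 0 < α) (hα1 : α < 1) (φ : ℝ → ℝ)
    (hφ : ContDiff ℝ (⊤ : ℕ∞) φ) (hsupp : HasCompactSupport φ) :
    ∃ B : ℝ, ∀ x, a ≤ x → |rightRLDerivR α φ x| ≤ B := by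
  -- support radius
  obtain ⟨R, hR⟩ := hsupp.isCompact.isBounded.subset_closedBall 0
  -- bound on φ and deriv φ
  obtain ⟨C₁, hC₁⟩ := hφ.continuous.bounded_above_of_compact_support hsupp
  obtain ⟨C₂, hC₂⟩ := ((hφ.continuous_deriv (by norm_num)).bounded_above_of_compact_support hsupp.deriv)
  set C : ℝ := max (max C₁ C₂) 0 with hC
  have hC0 : 0 ≤ C := le_max_right _ _
  have hCφ : ∀ x, |φ x| ≤ C := fun x => le_trans (hC₁ x) (le_trans (le_max_left _ _) (le_max_left _ _))
  have hCd : ∀ x, |deriv φ x| ≤ C := fun x => le_trans (hC₂ x) (le_trans (le_max_right _ _) (le_max_left _ _))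
  set M : ℝ := max 1 (R - a + 1) with hM
  have hM1 : (1:ℝ) ≤ M := le_max_left _ _
  -- vanishing of φ and deriv φ away
  have hvan : ∀ z t : ℝ, a - 1 < z → M < t → φ (z + t) = 0 ∧ deriv φ (z + t) = 0 := by
    intro z t hz ht
    have hzt : R < z + t := by
      have : R - a + 1 ≤ M := le_max_right _ _
      nlinarith
    have hmem : z + t ∉ tsupport φ := by
      intro hmem
      have h1 := hR hmem
      rw [Metric.mem_closedBall, Real.dist_eq, sub_zero] at h1
      have h2 := le_abs_self (z + t)
      linarith
    constructor
    · exact image_eq_zero_of_notMem_tsupport hmem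
    · by_contra h0
      exact hmem (support_deriv_subset (by simpa using h0))
  -- the dominating function
  set g : ℝ → ℝ := Set.indicator (Set.Ioc 0 M) (fun t => C * t ^ (-α)) with hg
  have hg_nonneg : ∀ t, 0 < t → 0 ≤ g t := by
    intro t ht
    by_cases h : t ∈ Set.Ioc 0 M
    · rw [hg, Set.indicator_of_mem h]
      exact mul_nonneg hC0 (Real.rpow_nonneg ht.le _)
    · rw [hg, Set.indicator_of_notMem h]
  have hg_int : Integrable g (volume.restrict (Set.Ioi 0)) := by
    have h1 : IntervalIntegrable (fun t : ℝ => t ^ (-α)) volume 0 M :=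
      intervalIntegral.intervalIntegrable_rpow' (by linarith)
    have h2 : IntegrableOn (fun t : ℝ => t ^ (-α)) (Set.Ioc 0 M) volume :=
      (intervalIntegrable_iff_integrableOn_Ioc_of_le (by linarith)).mp h1
    have h3 : IntegrableOn (fun t : ℝ => C * t ^ (-α)) (Set.Ioc 0 M) volume := h2.const_mul C
    exact ((integrable_indicator_iff measurableSet_Ioc).mpr h3).restrict
  -- rewrite the integral by translation
  have hfun : (fun z => ∫ y in Set.Ioi z, φ y * (y - z) ^ (-α))
      = fun z => ∫ t in Set.Ioi (0:ℝ), φ (z + t) * t ^ (-α) := by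
    funext z
    rw [translate_Ioi z (fun y => φ y * (y - z) ^ (-α))]
    simp
  have hrpmeas : AEStronglyMeasurable (fun t : ℝ => t ^ (-α)) (volume.restrict (Set.Ioi 0)) := by
    refine ContinuousOn.aestronglyMeasurable (fun t ht => ?_) measurableSet_Ioi
    exact (Real.continuousAt_rpow_const t (-α) (Or.inl (ne_of_gt ht))).continuousWithinAt
  have hmeas : ∀ z : ℝ, AEStronglyMeasurable (fun t => φ (z + t) * t ^ (-α))
      (volume.restrict (Set.Ioi 0)) := fun z =>
    ((hφ.continuous.comp (continuous_const.add continuous_id)).aestronglyMeasurable.mul hrpmeas)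
  have hrpow_abs : ∀ t : ℝ, 0 < t → |t ^ (-α)| = t ^ (-α) := fun t ht =>
    abs_of_nonneg (Real.rpow_nonneg ht.le _)
  refine ⟨|1 / Real.Gamma (1 - α)| * ∫ t in Set.Ioi (0:ℝ), g t, ?_⟩
  intro x hx
  -- a.e. bound for the derivative integrand on the ball
  have hbound : ∀ᵐ t ∂(volume.restrict (Set.Ioi 0)), ∀ z ∈ Metric.ball x 1,
      ‖deriv φ (z + t) * t ^ (-α)‖ ≤ g t := by
    rw [ae_restrict_iff' measurableSet_Ioi]
    refine Filter.Eventually.of_forall fun t ht => fun z hz => ?_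
    have ht0 : (0:ℝ) < t := Set.mem_Ioi.mp ht
    have hza : a - 1 < z := by
      have := Metric.mem_ball.mp hz
      rw [Real.dist_eq] at this
      have := abs_lt.mp this
      linarith [this.1, hx]
    by_cases htM : t ≤ M
    · rw [hg, Set.indicator_of_mem (Set.mem_Ioc.mpr ⟨ht0, htM⟩)]
      rw [Real.norm_eq_abs, abs_mul, hrpow_abs t ht0]
      exact mul_le_mul_of_nonneg_right (hCd _) (Real.rpow_nonneg ht0.le _)
    · rw [(hvan z t hza (lt_of_not_ge htM)).2]
      simpa using hg_nonneg t ht0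
  -- integrability at x
  have hFint : Integrable (fun t => φ (x + t) * t ^ (-α)) (volume.restrict (Set.Ioi 0)) := by
    refine Integrable.mono' hg_int (hmeas x) ?_
    rw [ae_restrict_iff' measurableSet_Ioi]
    refine Filter.Eventually.of_forall fun t ht => ?_
    have ht0 : (0:ℝ) < t := Set.mem_Ioi.mp ht
    by_cases htM : t ≤ M
    · rw [hg, Set.indicator_of_mem (Set.mem_Ioc.mpr ⟨ht0, htM⟩)]
      rw [Real.norm_eq_abs, abs_mul, hrpow_abs t ht0]
      exact mul_le_mul_of_nonneg_right (hCφ _) (Real.rpow_nonneg ht0.le _)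
    · rw [(hvan x t (by linarith) (lt_of_not_ge htM)).1]
      simpa using hg_nonneg t ht0
  have hF'meas : AEStronglyMeasurable (fun t => deriv φ (x + t) * t ^ (-α))
      (volume.restrict (Set.Ioi 0)) :=
    (((hφ.continuous_deriv (by norm_num)).comp (continuous_const.add continuous_id)).aestronglyMeasurable.mul hrpmeas)
  have hdiff : ∀ᵐ t ∂(volume.restrict (Set.Ioi 0)), ∀ z ∈ Metric.ball x 1,
      HasDerivAt (fun z => φ (z + t) * t ^ (-α)) (deriv φ (z + t) * t ^ (-α)) z := by
    refine Filter.Eventually.of_forall fun t => fun z _ => ?_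
    have h1 : HasDerivAt φ (deriv φ (z + t)) (z + t) :=
      ((hφ.differentiable (by norm_num)) (z + t)).hasDerivAt
    have h2 : HasDerivAt (fun w : ℝ => w + t) 1 z := (hasDerivAt_id z).add_const t
    have h3 := (h1.comp z h2).mul_const (t ^ (-α))
    simpa using h3
  have key := (hasDerivAt_integral_of_dominated_loc_of_deriv_le
    (μ := volume.restrict (Set.Ioi 0)) (F := fun z t => φ (z + t) * t ^ (-α))
    (F' := fun z t => deriv φ (z + t) * t ^ (-α)) (x₀ := x) (bound := g)
    (Metric.ball_mem_nhds x one_pos) (Filter.Eventually.of_forall fun z => hmeas z) hFint hF'meas hbound hg_int hdiff).2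
  have hderiv_eq : deriv (fun z => ∫ y in Set.Ioi z, φ y * (y - z) ^ (-α)) x
      = ∫ t in Set.Ioi (0:ℝ), deriv φ (x + t) * t ^ (-α) := by
    rw [hfun]; exact key.deriv
  have hDx : ‖∫ t in Set.Ioi (0:ℝ), deriv φ (x + t) * t ^ (-α)‖ ≤ ∫ t in Set.Ioi (0:ℝ), g t := by
    refine norm_integral_le_of_norm_le hg_int ?_
    filter_upwards [hbound] with t ht
    exact ht x (Metric.mem_ball_self one_pos)
  rw [rightRLDerivR, hderiv_eq, abs_mul, abs_neg]
  exact mul_le_mul_of_nonneg_left (by rw [← Real.norm_eq_abs]; exact hDx) (abs_nonneg _)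

lemma tendsto_setIntegral_mul (a b p : ℝ) (hp : 1 ≤ p)
    (w : ℕ → ℝ → ℝ) (W g : ℝ → ℝ) (C : ℝ)
    (hwn : ∀ n, MemLp (w n) (ENNReal.ofReal p) (volume.restrict (Set.Ioo a b)))
    (hW : MemLp W (ENNReal.ofReal p) (volume.restrict (Set.Ioo a b)))
    (htend : Tendsto (fun n => eLpNorm (fun x => w n x - W x) (ENNReal.ofReal p)
      (volume.restrict (Set.Ioo a b))) atTop (𝓝 0))
    (hg : AEStronglyMeasurable g (volume.restrict (Set.Ioo a b)))
    (hgb : ∀ x ∈ Set.Ioo a b, |g x| ≤ C) :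
    Tendsto (fun n => ∫ x in Set.Ioo a b, w n x * g x) atTop
      (𝓝 (∫ x in Set.Ioo a b, W x * g x)) := by
  set μ := volume.restrict (Set.Ioo a b) with hμ
  haveI : IsFiniteMeasure μ := ⟨by rw [Measure.restrict_apply_univ]; exact measure_Ioo_lt_top⟩
  have hq1 : (1:ℝ≥0∞) ≤ ENNReal.ofReal p := ENNReal.one_le_ofReal.mpr hp
  set C' : ℝ := max C 0 with hC'
  have hgb' : ∀ᵐ x ∂μ, ‖g x‖ ≤ C' := by
    rw [hμ, ae_restrict_iff' measurableSet_Ioo]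
    exact ae_of_all _ fun x hx => le_trans (hgb x hx) (le_max_left _ _)
  have hint : ∀ (f : ℝ → ℝ), MemLp f (ENNReal.ofReal p) μ → Integrable (fun x => f x * g x) μ := by
    intro f hf
    have h1 : Integrable f μ := hf.integrable hq1
    have := Integrable.bdd_mul (c := C') h1 hg hgb'
    simpa [mul_comm] using this
  -- L¹ convergence
  have hL1 : Tendsto (fun n => eLpNorm (fun x => w n x - W x) 1 μ) atTop (𝓝 0) := by
    set c : ℝ≥0∞ := μ Set.univ ^ (1/(1:ℝ≥0∞).toReal - 1/(ENNReal.ofReal p).toReal) with hc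
    have hcne : c ≠ ∞ := by
      apply ENNReal.rpow_ne_top_of_nonneg
      · rw [ENNReal.toReal_one, ENNReal.toReal_ofReal (le_trans zero_le_one hp)]
        have : 1/p ≤ 1 := by
          rw [div_le_one (by linarith)]; linarith
        linarith
      · exact measure_ne_top μ _
    have hb : ∀ n, eLpNorm (fun x => w n x - W x) 1 μ ≤
        eLpNorm (fun x => w n x - W x) (ENNReal.ofReal p) μ * c :=
      fun n => eLpNorm_le_eLpNorm_mul_rpow_measure_univ hq1 ((hwn n).sub hW).aestronglyMeasurable
    have hmul : Tendsto (fun n => eLpNorm (fun x => w n x - W x) (ENNReal.ofReal p) μ * c)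
        atTop (𝓝 0) := by
      have := ENNReal.Tendsto.mul_const htend (Or.inr hcne)
      simpa using this
    exact tendsto_of_tendsto_of_tendsto_of_le_of_le tendsto_const_nhds hmul
      (fun n => zero_le (a := _)) hb
  have hre : Tendsto (fun n => (eLpNorm (fun x => w n x - W x) 1 μ).toReal) atTop (𝓝 0) := by
    have := (ENNReal.tendsto_toReal (by norm_num : (0:ℝ≥0∞) ≠ ∞)).comp hL1
    simpa [Function.comp_def] using this
  -- compare with integrals
  have hest : ∀ n, ‖(∫ x, w n x * g x ∂μ) - ∫ x, W x * g x ∂μ‖ ≤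
      C' * (eLpNorm (fun x => w n x - W x) 1 μ).toReal := by
    intro n
    have hI1 : Integrable (fun x => w n x * g x) μ := hint _ (hwn n)
    have hI2 : Integrable (fun x => W x * g x) μ := hint _ hW
    have hI3 : Integrable (fun x => w n x - W x) μ := ((hwn n).sub hW).integrable hq1
    rw [← integral_sub hI1 hI2]
    have heq : ∀ x, w n x * g x - W x * g x = (w n x - W x) * g x := fun x => by ring
    simp_rw [heq]
    calc ‖∫ x, (w n x - W x) * g x ∂μ‖ ≤ ∫ x, ‖(w n x - W x) * g x‖ ∂μ :=
          norm_integral_le_integral_norm _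
      _ ≤ ∫ x, C' * ‖w n x - W x‖ ∂μ := by
          refine integral_mono_ae ((hint _ ((hwn n).sub hW)).norm) (hI3.norm.const_mul C') ?_
          filter_upwards [hgb'] with x hx
          rw [norm_mul]
          calc ‖w n x - W x‖ * ‖g x‖ ≤ ‖w n x - W x‖ * C' :=
                mul_le_mul_of_nonneg_left hx (norm_nonneg _)
            _ = C' * ‖w n x - W x‖ := mul_comm _ _
      _ = C' * ∫ x, ‖w n x - W x‖ ∂μ := integral_const_mul _ _
      _ = C' * (eLpNorm (fun x => w n x - W x) 1 μ).toReal := by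
          rw [integral_norm_eq_lintegral_enorm hI3.aestronglyMeasurable,
            eLpNorm_one_eq_lintegral_enorm]
  have hz : Tendsto (fun n => (∫ x, w n x * g x ∂μ) - ∫ x, W x * g x ∂μ) atTop (𝓝 0) := by
    apply squeeze_zero_norm hest
    have := hre.const_mul C'
    simpa using this
  have := hz.add_const (∫ x, W x * g x ∂μ)
  simpa using this

lemma lp_limit (p a b : ℝ) (hp : 1 ≤ p) (w : ℕ → ℝ → ℝ)
    (hwn : ∀ n, MemLp (w n) (ENNReal.ofReal p) (volume.restrict (Set.Ioo a b)))
    (hcau : ∀ ε : ℝ≥0∞, 0 < ε → ∃ N, ∀ m ≥ N, ∀ n ≥ N,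
      eLpNorm (fun x => w m x - w n x) (ENNReal.ofReal p) (volume.restrict (Set.Ioo a b)) < ε) :
    ∃ W : ℝ → ℝ, MemLp W (ENNReal.ofReal p) (volume.restrict (Set.Ioo a b)) ∧
      Tendsto (fun n => eLpNorm (fun x => w n x - W x) (ENNReal.ofReal p)
        (volume.restrict (Set.Ioo a b))) atTop (𝓝 0) := by
  set μ := volume.restrict (Set.Ioo a b) with hμ
  set q := ENNReal.ofReal p with hq
  have hq1 : (1:ℝ≥0∞) ≤ q := ENNReal.one_le_ofReal.mpr hp
  haveI : Fact ((1:ℝ≥0∞) ≤ q) := ⟨hq1⟩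
  let f : ℕ → Lp ℝ q μ := fun n => (hwn n).toLp (w n)
  have hcf : CauchySeq f := by
    rw [Metric.cauchySeq_iff]
    intro ε hε
    obtain ⟨N, hN⟩ := hcau (ENNReal.ofReal ε) (ENNReal.ofReal_pos.mpr hε)
    refine ⟨N, fun m hm n hn => ?_⟩
    have key : f m - f n = ((hwn m).sub (hwn n)).toLp (w m - w n) :=
      (MemLp.toLp_sub (hwn m) (hwn n)).symm
    rw [dist_eq_norm, key, Lp.norm_toLp]
    exact ENNReal.toReal_lt_of_lt_ofReal (hN m hm n hn)
  obtain ⟨F, hF⟩ := cauchySeq_tendsto_of_complete hcf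
  refine ⟨⇑F, Lp.memLp F, ?_⟩
  have heq : ∀ n, eLpNorm (fun x => w n x - F x) q μ = ENNReal.ofReal ‖f n - F‖ := by
    intro n
    have h1 : (fun x => w n x - F x) =ᵐ[μ] ⇑(f n - F) := by
      filter_upwards [(hwn n).coeFn_toLp, Lp.coeFn_sub (f n) F] with x hx1 hx2
      rw [hx2, Pi.sub_apply, hx1]
    rw [eLpNorm_congr_ae h1, Lp.norm_def, ENNReal.ofReal_toReal (Lp.eLpNorm_ne_top _)]
  have hnorm : Tendsto (fun n => ‖f n - F‖) atTop (𝓝 0) := by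
    rw [← tendsto_iff_norm_sub_tendsto_zero]; exact hF
  have := (ENNReal.continuous_ofReal.tendsto 0).comp hnorm
  rw [ENNReal.ofReal_zero] at this
  exact Tendsto.congr (fun n => (heq n).symm) this

theorem stmt12 (α p a b : ℝ) (hα : 0 < α) (hα1 : α < 1) (hp : 1 ≤ p) (hab : a < b)
    (u v : ℕ → ℝ → ℝ)
    (hu : ∀ n, MemLp (u n) (ENNReal.ofReal p) (volume.restrict (Set.Ioo a b)))
    (hw : ∀ n, IsLeftWeakFracDerivOn α (Set.Ioo a b) (u n) (v n))
    (hv : ∀ n, MemLp (v n) (ENNReal.ofReal p) (volume.restrict (Set.Ioo a b)))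
    (hcauchy : ∀ ε : ℝ≥0∞, 0 < ε → ∃ N : ℕ, ∀ m ≥ N, ∀ n ≥ N,
      eLpNorm (fun x => u m x - u n x) (ENNReal.ofReal p) (volume.restrict (Set.Ioo a b)) +
      eLpNorm (fun x => v m x - v n x) (ENNReal.ofReal p) (volume.restrict (Set.Ioo a b)) < ε) :
    ∃ U V : ℝ → ℝ,
      MemLp U (ENNReal.ofReal p) (volume.restrict (Set.Ioo a b)) ∧
      IsLeftWeakFracDerivOn α (Set.Ioo a b) U V ∧
      MemLp V (ENNReal.ofReal p) (volume.restrict (Set.Ioo a b)) ∧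
      Filter.Tendsto
        (fun n => eLpNorm (fun x => u n x - U x) (ENNReal.ofReal p)
          (volume.restrict (Set.Ioo a b))) Filter.atTop (nhds 0) ∧
      Filter.Tendsto
        (fun n => eLpNorm (fun x => v n x - V x) (ENNReal.ofReal p)
          (volume.restrict (Set.Ioo a b))) Filter.atTop (nhds 0) := by
  set μ := volume.restrict (Set.Ioo a b) with hμ
  set q := ENNReal.ofReal p with hq
  have hcu : ∀ ε : ℝ≥0∞, 0 < ε → ∃ N, ∀ m ≥ N, ∀ n ≥ N,
      eLpNorm (fun x => u m x - u n x) q μ < ε := by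
    intro ε hε
    obtain ⟨N, hN⟩ := hcauchy ε hε
    exact ⟨N, fun m hm n hn => lt_of_le_of_lt le_self_add (hN m hm n hn)⟩
  have hcv : ∀ ε : ℝ≥0∞, 0 < ε → ∃ N, ∀ m ≥ N, ∀ n ≥ N,
      eLpNorm (fun x => v m x - v n x) q μ < ε := by
    intro ε hε
    obtain ⟨N, hN⟩ := hcauchy ε hε
    exact ⟨N, fun m hm n hn => lt_of_le_of_lt le_add_self (hN m hm n hn)⟩
  obtain ⟨U, hU, hUt⟩ := lp_limit p a b hp u hu hcu
  obtain ⟨V, hV, hVt⟩ := lp_limit p a b hp v hv hcv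
  refine ⟨U, V, hU, ?_, hV, hUt, hVt⟩
  intro φ hφ1 hφ2 hφ3
  obtain ⟨B, hB⟩ := rightRL_bound α a hα hα1 φ hφ1 hφ2
  obtain ⟨Cφ, hCφ⟩ := hφ1.continuous.bounded_above_of_compact_support hφ2
  have hmeasD : AEStronglyMeasurable (rightRLDerivR α φ) μ := by
    have : Measurable (rightRLDerivR α φ) :=
      (measurable_deriv _).const_mul _
    exact this.aestronglyMeasurable
  have h1 : Tendsto (fun n => ∫ x in Set.Ioo a b, v n x * φ x) atTop
      (𝓝 (∫ x in Set.Ioo a b, V x * φ x)) :=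
    tendsto_setIntegral_mul a b p hp v V φ Cφ hv hV hVt
      hφ1.continuous.aestronglyMeasurable.restrict (fun x _ => hCφ x)
  have h2 : Tendsto (fun n => ∫ x in Set.Ioo a b, u n x * rightRLDerivR α φ x) atTop
      (𝓝 (∫ x in Set.Ioo a b, U x * rightRLDerivR α φ x)) :=
    tendsto_setIntegral_mul a b p hp u U _ B hu hU hUt hmeasD (fun x hx => hB x hx.1.le)
  have h3 : ∀ n, ∫ x in Set.Ioo a b, v n x * φ x
      = ∫ x in Set.Ioo a b, u n x * rightRLDerivR α φ x := fun n => hw n φ hφ1 hφ2 hφ3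
  exact tendsto_nhds_unique (Tendsto.congr h3 h1) h2
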